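/- For all x ∈ [0,1], (5/2)·x² + ln(1+x) ≤ ((x + x²)/(1+2x)²)·(1 + 5x + 8.5·x²). -/

import Mathlib

lemma pade_log_bound (x : ℝ) (hx : 0 ≤ x) :
    Real.log (1 + x) ≤ x * (x + 6) / (4 * x + 6) := by
  set f : ℝ → ℝ := fun t => t * (t + 6) / (4 * t + 6) - Real.log (1 + t) with hf
  have key : ∀ y ∈ Set.Ici (0 : ℝ),
      HasDerivAt f (4 * y ^ 3 / ((4 * y + 6) ^ 2 * (1 + y))) y := by
    intro y hy
    have hy0 : (0 : ℝ) ≤ y := hy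
    have hd : (4 * y + 6) ≠ 0 := by nlinarith
    have hd2 : (1 + y) ≠ 0 := by nlinarith
    have h1 : HasDerivAt (fun t : ℝ => t * (t + 6)) (2 * y + 6) y := by
      have := (hasDerivAt_id y).mul ((hasDerivAt_id y).add_const 6)
      refine this.congr_deriv ?_; simp only [id_eq]; ring
    have h2 : HasDerivAt (fun t : ℝ => 4 * t + 6) 4 y := by
      have := ((hasDerivAt_id y).const_mul 4).add_const 6
      refine this.congr_deriv ?_; ring
    have h3 : HasDerivAt (fun t : ℝ => t * (t + 6) / (4 * t + 6))
        (((2 * y + 6) * (4 * y + 6) - y * (y + 6) * 4) / (4 * y + 6) ^ 2) y :=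
      h1.div h2 hd
    have h4 : HasDerivAt (fun t : ℝ => Real.log (1 + t)) (1 / (1 + y)) y := by
      have := (Real.hasDerivAt_log hd2).comp y ((hasDerivAt_id y).const_add 1)
      refine this.congr_deriv ?_
      simp
    have := h3.sub h4
    refine this.congr_deriv ?_
    field_simp
    ring
  have hmono : MonotoneOn f (Set.Ici (0 : ℝ)) := by
    apply monotoneOn_of_deriv_nonneg (convex_Ici 0)
    · exact fun y hy => (key y hy).differentiableAt.continuousAt.continuousWithinAt
    · intro y hy
      rw [interior_Ici] at hy
      exact (key y (le_of_lt hy : (0:ℝ) ≤ y)).differentiableAt.differentiableWithinAt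
    · intro y hy
      rw [interior_Ici] at hy
      rw [(key y (le_of_lt hy : (0:ℝ) ≤ y)).deriv]
      have : (0:ℝ) < y := hy
      positivity
  have h0 : f 0 ≤ f x := hmono (Set.self_mem_Ici) hx hx
  have hf0 : f 0 = 0 := by simp [hf]
  rw [hf0] at h0
  simp only [hf] at h0
  linarith

theorem key_log_inequality (x : ℝ) (hx : x ∈ Set.Icc (0 : ℝ) 1) :
    5 / 2 * x ^ 2 + Real.log (1 + x)
      ≤ (x + x ^ 2) / (1 + 2 * x) ^ 2 * (1 + 5 * x + 8.5 * x ^ 2) := by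
  obtain ⟨hx0, hx1⟩ := hx
  have hlog := pade_log_bound x hx0
  have hd1 : (0:ℝ) < 4 * x + 6 := by linarith
  have hd2 : (0:ℝ) < (1 + 2 * x) ^ 2 := by positivity
  have hkey : 5 / 2 * x ^ 2 + x * (x + 6) / (4 * x + 6)
      ≤ (x + x ^ 2) / (1 + 2 * x) ^ 2 * (1 + 5 * x + 8.5 * x ^ 2) := by
    rw [← sub_nonneg]
    have heq : (x + x ^ 2) / (1 + 2 * x) ^ 2 * (1 + 5 * x + 8.5 * x ^ 2)
        - (5 / 2 * x ^ 2 + x * (x + 6) / (4 * x + 6))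
        = (x ^ 3 * (1 + x) * (7 - 6 * x)) / ((1 + 2 * x) ^ 2 * (4 * x + 6)) := by
      field_simp
      ring
    rw [heq]
    have hnum : 0 ≤ x ^ 3 * (1 + x) * (7 - 6 * x) :=
      mul_nonneg (mul_nonneg (by positivity) (by linarith)) (by linarith)
    positivity
  linarith
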